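/- Let M be positive semidefinite and Y ∈ ℝ^{n×p} with all eigenvalues of YᵀMY in [5/6, 7/6]. Define A(Y) := Y((3/2)I_p − (1/2)YᵀMY) and R(Y) := Y(YᵀMY)^{-1/2}. Then ‖A(Y) − R(Y)‖_F ≤ (3/4)·‖Y‖_F·‖YᵀMY − I_p‖₂². -/

import Mathlib

open Matrix

attribute [local instance] Matrix.frobeniusNormedAddCommGroup Matrix.frobeniusNormedSpace

/-- The positive semidefinite square root of a positive semidefinite matrix
(the definition removed from Mathlib, restored with its old meaning). -/
noncomputable def Matrix.PosSemidef.sqrt {𝕜 : Type*} [RCLike 𝕜] [PartialOrder 𝕜] {n : Type*} [Fintype n]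
    [DecidableEq n] {A : Matrix n n 𝕜} (hA : A.PosSemidef) : Matrix n n 𝕜 :=
  hA.1.eigenvectorUnitary.1 * diagonal ((↑) ∘ (Real.sqrt ∘ hA.1.eigenvalues)) *
    (star hA.1.eigenvectorUnitary : Matrix n n 𝕜)

/-- The spectral (operator 2-) norm of a real square matrix. -/
noncomputable def specNorm {p : ℕ} (A : Matrix (Fin p) (Fin p) ℝ) : ℝ :=
  ‖(Matrix.toEuclideanCLM (𝕜 := ℝ) A : EuclideanSpace ℝ (Fin p) →L[ℝ] EuclideanSpace ℝ (Fin p))‖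

lemma tA_apply {p : ℕ} (A : Matrix (Fin p) (Fin p) ℝ) (x : EuclideanSpace ℝ (Fin p)) :
    Matrix.toEuclideanCLM (𝕜 := ℝ) A x = (WithLp.equiv 2 _).symm (A *ᵥ (WithLp.equiv 2 _) x) := by
  rfl

lemma unitary_norm_apply {p : ℕ} (V : Matrix (Fin p) (Fin p) ℝ) (hV : star V * V = 1)
    (x : EuclideanSpace ℝ (Fin p)) : ‖Matrix.toEuclideanCLM (𝕜 := ℝ) V x‖ = ‖x‖ := by
  set T := Matrix.toEuclideanCLM (𝕜 := ℝ) (n := Fin p)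
  have h2 : ‖T V x‖ ^ 2 = ‖x‖ ^ 2 := by
    rw [← real_inner_self_eq_norm_sq, ← real_inner_self_eq_norm_sq,
      ← ContinuousLinearMap.adjoint_inner_left, ← ContinuousLinearMap.star_eq_adjoint,
      ← map_star T, ← ContinuousLinearMap.mul_apply, ← _root_.map_mul, hV, _root_.map_one,
      ContinuousLinearMap.one_apply]
  have := congrArg Real.sqrt h2
  rwa [Real.sqrt_sq (norm_nonneg _), Real.sqrt_sq (norm_nonneg _)] at this

lemma specNorm_diagonal_le {p : ℕ} (d : Fin p → ℝ) (c : ℝ) (hc : 0 ≤ c)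
    (hd : ∀ i, |d i| ≤ c) : specNorm (Matrix.diagonal d) ≤ c := by
  apply ContinuousLinearMap.opNorm_le_bound _ hc
  intro x
  rw [tA_apply]
  have hx : ‖x‖ = Real.sqrt (∑ i, ‖x i‖ ^ 2) := EuclideanSpace.norm_eq x
  have hy : ‖(WithLp.equiv 2 (Fin p → ℝ)).symm (Matrix.diagonal d *ᵥ (WithLp.equiv 2 _) x)‖
      = Real.sqrt (∑ i, ‖d i * x i‖ ^ 2) := by
    rw [EuclideanSpace.norm_eq]
    congr 1
    refine Finset.sum_congr rfl fun i _ => ?_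
    congr 1
    rw [WithLp.equiv_symm_apply, PiLp.toLp_apply, Matrix.mulVec_diagonal]
    rfl
  rw [hx, hy, ← Real.sqrt_sq hc, ← Real.sqrt_mul (by positivity)]
  apply Real.sqrt_le_sqrt
  rw [Finset.mul_sum]
  refine Finset.sum_le_sum fun i _ => ?_
  rw [norm_mul, mul_pow]
  have : ‖d i‖ ^ 2 ≤ c ^ 2 := by
    rw [Real.norm_eq_abs]
    exact pow_le_pow_left₀ (abs_nonneg _) (hd i) 2
  nlinarith [norm_nonneg (x i), sq_nonneg (x i)]

lemma specNorm_conj_le {p : ℕ} (V D : Matrix (Fin p) (Fin p) ℝ) (hV : star V * V = 1)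
    (hV' : V * star V = 1) : specNorm (V * D * star V) ≤ specNorm D := by
  apply ContinuousLinearMap.opNorm_le_bound _ (norm_nonneg _)
  intro x
  rw [_root_.map_mul, _root_.map_mul, ContinuousLinearMap.mul_apply,
    ContinuousLinearMap.mul_apply, unitary_norm_apply V hV]
  calc ‖Matrix.toEuclideanCLM (𝕜 := ℝ) D (Matrix.toEuclideanCLM (𝕜 := ℝ) (star V) x)‖
      ≤ specNorm D * ‖Matrix.toEuclideanCLM (𝕜 := ℝ) (star V) x‖ :=
        ContinuousLinearMap.le_opNorm _ _
    _ = specNorm D * ‖x‖ := by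
        rw [unitary_norm_apply (star V) (by rwa [star_star])]

lemma abs_le_specNorm {p : ℕ} (A : Matrix (Fin p) (Fin p) ℝ) (v : EuclideanSpace ℝ (Fin p))
    (hv : ‖v‖ = 1) (μ : ℝ) (h : A *ᵥ (WithLp.equiv 2 _) v = μ • (WithLp.equiv 2 _) v) :
    |μ| ≤ specNorm A := by
  have h1 : Matrix.toEuclideanCLM (𝕜 := ℝ) A v = μ • v := by
    rw [tA_apply, h]; rfl
  have := ContinuousLinearMap.le_opNorm (Matrix.toEuclideanCLM (𝕜 := ℝ) A) v
  rwa [h1, norm_smul, Real.norm_eq_abs, hv, mul_one, mul_one] at this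

lemma scalar_ineq {x : ℝ} (h5 : 5/6 ≤ x) :
    |3/2 - x/2 - (Real.sqrt x)⁻¹| ≤ 3/4 * (x - 1)^2 := by
  have hx0 : (0:ℝ) ≤ x := by linarith
  set s := Real.sqrt x with hs
  have hs2 : s ^ 2 = x := Real.sq_sqrt hx0
  have hs9 : (9:ℝ)/10 ≤ s := by
    rw [hs, show (9:ℝ)/10 = Real.sqrt ((9/10)^2) by rw [Real.sqrt_sq]; norm_num]
    exact Real.sqrt_le_sqrt (by norm_num; nlinarith)
  have hspos : (0:ℝ) < s := by linarith
  have hinv : s⁻¹ * s = 1 := inv_mul_cancel₀ hspos.ne'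
  have hinvpos : 0 < s⁻¹ := inv_pos.mpr hspos
  have cube : (0:ℝ) ≤ 3*s^3 + 6*s^2 + s - 4 := by nlinarith [hs9, sq_nonneg s]
  have key : (0:ℝ) ≤ (s-1)^2 * (3*s^3 + 6*s^2 + s - 4) :=
    mul_nonneg (sq_nonneg _) cube
  rw [abs_le]
  constructor
  · nlinarith [key, hinv, hspos, hs2, hinvpos]
  · nlinarith [mul_nonneg (sq_nonneg (s-1)) (by linarith : (0:ℝ) ≤ s+2), hinv, hspos, hs2, hinvpos]

lemma frobenius_mul_spec_le {n p : ℕ} (Y : Matrix (Fin n) (Fin p) ℝ)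
    (B : Matrix (Fin p) (Fin p) ℝ) : ‖Y * B‖ ≤ ‖Y‖ * specNorm Bᵀ := by
  have hs0 : 0 ≤ specNorm Bᵀ := norm_nonneg _
  have row : ∀ i, ∑ j, ‖(Y * B) i j‖ ^ (2:ℝ) ≤ specNorm Bᵀ ^ 2 * ∑ j, ‖Y i j‖ ^ (2:ℝ) := by
    intro i
    set v : EuclideanSpace ℝ (Fin p) := (WithLp.equiv 2 _).symm (Y i) with hv
    have hTv : Matrix.toEuclideanCLM (𝕜 := ℝ) Bᵀ v
        = (WithLp.equiv 2 _).symm (Bᵀ *ᵥ Y i) := by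
      rw [tA_apply, hv, Equiv.apply_symm_apply]
    have hb : ‖Matrix.toEuclideanCLM (𝕜 := ℝ) Bᵀ v‖ ≤ specNorm Bᵀ * ‖v‖ :=
      ContinuousLinearMap.le_opNorm _ _
    have hb2 : ‖Matrix.toEuclideanCLM (𝕜 := ℝ) Bᵀ v‖ ^ 2 ≤ (specNorm Bᵀ * ‖v‖) ^ 2 :=
      pow_le_pow_left₀ (norm_nonneg _) hb 2
    have hw : ‖Matrix.toEuclideanCLM (𝕜 := ℝ) Bᵀ v‖ ^ 2 = ∑ j, ‖(Y * B) i j‖ ^ 2 := by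
      rw [hTv, EuclideanSpace.norm_eq, Real.sq_sqrt (by positivity)]
      refine Finset.sum_congr rfl fun j _ => ?_
      congr 1
      rw [WithLp.equiv_symm_apply, PiLp.toLp_apply, Matrix.mulVec, Matrix.mul_apply]
      simp [dotProduct, Matrix.transpose_apply, mul_comm]
    have hv2 : ‖v‖ ^ 2 = ∑ j, ‖Y i j‖ ^ 2 := by
      rw [hv, EuclideanSpace.norm_eq, Real.sq_sqrt (by positivity)]
      refine Finset.sum_congr rfl fun j _ => ?_
      rw [WithLp.equiv_symm_apply, PiLp.toLp_apply]
    calc ∑ j, ‖(Y * B) i j‖ ^ (2:ℝ) = ∑ j, ‖(Y * B) i j‖ ^ (2:ℕ) := by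
          refine Finset.sum_congr rfl fun j _ => ?_
          rw [← Real.rpow_natCast]; norm_num
      _ ≤ specNorm Bᵀ ^ 2 * ∑ j, ‖Y i j‖ ^ (2:ℕ) := by
          rw [← hw, ← hv2]; rw [mul_pow] at hb2; exact hb2
      _ = specNorm Bᵀ ^ 2 * ∑ j, ‖Y i j‖ ^ (2:ℝ) := by
          congr 1
          refine Finset.sum_congr rfl fun j _ => ?_
          rw [← Real.rpow_natCast]; norm_num
  rw [Matrix.frobenius_norm_def, Matrix.frobenius_norm_def]
  have hsum : ∑ i, ∑ j, ‖(Y * B) i j‖ ^ (2:ℝ)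
      ≤ specNorm Bᵀ ^ 2 * ∑ i, ∑ j, ‖Y i j‖ ^ (2:ℝ) := by
    rw [Finset.mul_sum]
    exact Finset.sum_le_sum fun i _ => row i
  calc (∑ i, ∑ j, ‖(Y * B) i j‖ ^ (2:ℝ)) ^ (1/2:ℝ)
      ≤ (specNorm Bᵀ ^ 2 * ∑ i, ∑ j, ‖Y i j‖ ^ (2:ℝ)) ^ (1/2:ℝ) := by
        apply Real.rpow_le_rpow (by positivity) hsum (by norm_num)
    _ = (∑ i, ∑ j, ‖Y i j‖ ^ (2:ℝ)) ^ (1/2:ℝ) * specNorm Bᵀ := by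
        rw [Real.mul_rpow (by positivity) (by positivity)]
        have h2 : (specNorm Bᵀ ^ 2 : ℝ) ^ (1/2:ℝ) = specNorm Bᵀ := by
          rw [← Real.rpow_natCast (specNorm Bᵀ) 2, ← Real.rpow_mul hs0]
          norm_num
        rw [h2, mul_comm]
    _ = _ := by rw [mul_comm]

/-- With `A(Y) := Y((3/2)I − (1/2)YᵀMY)` and `R(Y) := Y(YᵀMY)^{-1/2}`, if all eigenvalues
of `YᵀMY` lie in `[5/6, 7/6]` then `‖A(Y) − R(Y)‖_F ≤ (3/4)‖Y‖_F ‖YᵀMY − I‖₂²`. -/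
theorem stmt_4 {n p : ℕ} (M : Matrix (Fin n) (Fin n) ℝ) (hM : M.PosSemidef)
    (Y : Matrix (Fin n) (Fin p) ℝ) (hS : (Yᵀ * M * Y).PosSemidef)
    (heig : ∀ i, hS.1.eigenvalues i ∈ Set.Icc (5 / 6 : ℝ) (7 / 6)) :
    ‖Y * ((3 / 2 : ℝ) • (1 : Matrix (Fin p) (Fin p) ℝ) - (1 / 2 : ℝ) • (Yᵀ * M * Y))
        - Y * (hS.sqrt)⁻¹‖
      ≤ (3 / 4) * ‖Y‖ * specNorm (Yᵀ * M * Y - 1) ^ 2 := by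
  set S := Yᵀ * M * Y with hSdef
  set hH := hS.1 with hHdef
  set V : Matrix (Fin p) (Fin p) ℝ := (hH.eigenvectorUnitary : Matrix (Fin p) (Fin p) ℝ) with hVdef
  set lam := hH.eigenvalues with hlam
  have hVs : star V * V = 1 := Unitary.coe_star_mul_self _
  have hVs' : V * star V = 1 := Unitary.coe_mul_star_self _
  have hlampos : ∀ i, 0 < lam i := fun i => lt_of_lt_of_le (by norm_num) (heig i).1
  have hsqrtpos : ∀ i, 0 < Real.sqrt (lam i) := fun i => Real.sqrt_pos.mpr (hlampos i)
  -- spectral theorem for S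
  have hspec : S = V * Matrix.diagonal lam * star V := by
    have := hH.spectral_theorem
    simpa using this
  -- the square root
  have hsqrt : hS.sqrt = V * Matrix.diagonal (fun i => Real.sqrt (lam i)) * star V := by
    rfl
  -- inverse of the square root
  set W : Matrix (Fin p) (Fin p) ℝ :=
    V * Matrix.diagonal (fun i => (Real.sqrt (lam i))⁻¹) * star V with hWdef
  have hSW : hS.sqrt * W = 1 := by
    rw [hsqrt, hWdef]
    simp only [mul_assoc]
    rw [← mul_assoc (star V) V, hVs, one_mul,
      ← mul_assoc (Matrix.diagonal _) (Matrix.diagonal _) (star V),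
      Matrix.diagonal_mul_diagonal]
    have : (fun i => Real.sqrt (lam i) * (Real.sqrt (lam i))⁻¹) = fun _ => (1:ℝ) := by
      funext i; exact mul_inv_cancel₀ (hsqrtpos i).ne'
    rw [this, Matrix.diagonal_one, one_mul, hVs']
  have hinv : (hS.sqrt)⁻¹ = W := Matrix.inv_eq_right_inv hSW
  -- the matrix B
  set f : Fin p → ℝ := fun i => 3/2 - lam i / 2 - (Real.sqrt (lam i))⁻¹ with hfdef
  set B : Matrix (Fin p) (Fin p) ℝ :=
    (3 / 2 : ℝ) • (1 : Matrix (Fin p) (Fin p) ℝ) - (1 / 2 : ℝ) • S - W with hBdef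
  have hone : (1 : Matrix (Fin p) (Fin p) ℝ) = V * Matrix.diagonal (fun _ => (1:ℝ)) * star V := by
    rw [Matrix.diagonal_one, mul_one, hVs']
  have hBdiag : B = V * Matrix.diagonal f * star V := by
    rw [hBdef, hspec, hone, hWdef]
    rw [← smul_mul_assoc, ← mul_smul_comm, ← smul_mul_assoc, ← mul_smul_comm,
      ← Matrix.sub_mul, ← Matrix.mul_sub, ← Matrix.sub_mul, ← Matrix.mul_sub,
      ← Matrix.diagonal_smul, ← Matrix.diagonal_smul, Matrix.diagonal_sub,
      Matrix.diagonal_sub]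
    congr 2
    congr 1
    funext i
    simp only [Pi.smul_apply, smul_eq_mul, hfdef]
    ring
  -- eigenvalue bound on specNorm (S - 1)
  set t := specNorm (S - 1) with ht
  have hlamt : ∀ i, |lam i - 1| ≤ t := by
    intro i
    apply abs_le_specNorm (S - 1) (hH.eigenvectorBasis i)
      (hH.eigenvectorBasis.orthonormal.1 i)
    simp only [WithLp.equiv_apply]
    rw [Matrix.sub_mulVec, Matrix.one_mulVec, hH.mulVec_eigenvectorBasis i, sub_smul, one_smul]
  have ht0 : 0 ≤ t := norm_nonneg _
  -- bound on entries of f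
  have hfb : ∀ i, |f i| ≤ 3/4 * t^2 := by
    intro i
    have h1 : |f i| ≤ 3/4 * (lam i - 1)^2 := scalar_ineq (heig i).1
    have h2 : (lam i - 1)^2 ≤ t^2 := by
      rw [← sq_abs]
      exact pow_le_pow_left₀ (abs_nonneg _) (hlamt i) 2
    nlinarith
  -- spectral norm bound on B
  have hBspec : specNorm B ≤ 3/4 * t^2 := by
    rw [hBdiag]
    exact le_trans (specNorm_conj_le V _ hVs hVs')
      (specNorm_diagonal_le f _ (by positivity) hfb)
  -- B is symmetric
  have hBt : Bᵀ = B := by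
    rw [hBdiag, ← Matrix.conjTranspose_eq_transpose_of_trivial]
    have : star V = Vᴴ := rfl
    rw [this]
    exact Matrix.isHermitian_mul_mul_conjTranspose V (Matrix.isHermitian_diagonal f)
  -- assemble
  rw [hinv, ← Matrix.mul_sub]
  calc ‖Y * B‖ ≤ ‖Y‖ * specNorm Bᵀ := frobenius_mul_spec_le Y B
    _ = ‖Y‖ * specNorm B := by rw [hBt]
    _ ≤ ‖Y‖ * (3/4 * t^2) := mul_le_mul_of_nonneg_left hBspec (norm_nonneg _)
    _ = 3/4 * ‖Y‖ * t^2 := by ring
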